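/- arXiv:2509.01562 — 5 statements merged into one kernel-verified Lean document; each statement's English description precedes it below -/
import Mathlib

section
/- The exponential cone K_exp is a closed subset of ℝ³, and it equals the topological closure of the set {(x₁,x₂,x₃) ∈ ℝ³ : x₂ > 0 and x₁ ≥ x₂·exp(x₃/x₂)}; in particular the half-plane component {(x₁,0,x₃) : x₁ ≥ 0, x₃ ≤ 0} consists exactly of the limit points with x₂ = 0 of the region with x₂ > 0. -/
/-- The exponential cone `K_exp ⊆ ℝ³`:
`{(x₁,x₂,x₃) : x₂ > 0 ∧ x₁ ≥ x₂·exp(x₃/x₂)} ∪ {(x₁,0,x₃) : x₁ ≥ 0 ∧ x₃ ≤ 0}`. -/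
def Kexp : Set (ℝ × ℝ × ℝ) :=
  {x | (0 < x.2.1 ∧ x.2.1 * Real.exp (x.2.2 / x.2.1) ≤ x.1) ∨
       (x.2.1 = 0 ∧ 0 ≤ x.1 ∧ x.2.2 ≤ 0)}

lemma Kexp_eq_iInter :
    Kexp = ⋂ t : ℝ, {x : ℝ × ℝ × ℝ | Real.exp t * (x.2.2 + (1 - t) * x.2.1) ≤ x.1} := by
  ext ⟨a, b, c⟩
  simp only [Kexp, Set.mem_setOf_eq, Set.mem_iInter]
  constructor
  · rintro (⟨hb, h⟩ | ⟨hb, ha, hc⟩) t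
    · refine le_trans ?_ h
      have hb' : b ≠ 0 := hb.ne'
      have key : Real.exp t * (c / b + (1 - t)) ≤ Real.exp (c / b) := by
        have h1 := Real.add_one_le_exp (c / b - t)
        have h2 : Real.exp t * Real.exp (c / b - t) = Real.exp (c / b) := by
          rw [← Real.exp_add]; ring_nf
        nlinarith [Real.exp_pos t]
      have : Real.exp t * (c + (1 - t) * b) = b * (Real.exp t * (c / b + (1 - t))) := by
        field_simp
      rw [this]
      nlinarith
    · subst hb
      have : Real.exp t * c ≤ 0 := mul_nonpos_of_nonneg_of_nonpos (Real.exp_pos t).le hc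
      simpa using this.trans ha
  · intro h
    rcases lt_trichotomy b 0 with hb | hb | hb
    · exfalso
      set t := max 1 ((max (a + 1) 1 - c - b) / (-b)) with ht
      have ht1 : (1 : ℝ) ≤ t := le_max_left _ _
      have ht2 : (max (a + 1) 1 - c - b) / (-b) ≤ t := le_max_right _ _
      have hnb : (0 : ℝ) < -b := by linarith
      have hq : max (a + 1) 1 ≤ c + (1 - t) * b := by
        have := (div_le_iff₀ hnb).mp ht2
        nlinarith
      have hq1 : (1 : ℝ) ≤ c + (1 - t) * b := le_trans (le_max_right _ _) hq
      have hqa : a + 1 ≤ c + (1 - t) * b := le_trans (le_max_left _ _) hq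
      have het : (1 : ℝ) ≤ Real.exp t := by
        have := Real.add_one_le_exp t; linarith
      have := h t
      nlinarith
    · subst hb
      have hc : c ≤ 0 := by
        by_contra hc
        push_neg at hc
        set t := max 0 (a / c) with ht
        have h1 : a / c ≤ t := le_max_right _ _
        have h2 : t + 1 ≤ Real.exp t := Real.add_one_le_exp t
        have h3 := h t
        have : a / c < Real.exp t := by linarith
        have : a < Real.exp t * c := by
          have := (div_lt_iff₀ hc).mp this
          linarith
        simp at h3
        linarith
      refine Or.inr ⟨rfl, ?_, hc⟩
      by_contra ha
      push_neg at ha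
      have hc' : c < 0 := by
        have := h 0
        simp at this
        nlinarith
      set t := Real.log (a / c) - 1 with ht
      have hac : 0 < a / c := div_pos_of_neg_of_neg ha hc'
      have he : Real.exp t = (a / c) / Real.exp 1 := by
        rw [ht, Real.exp_sub, Real.exp_log hac]
      have h1e : (1 : ℝ) < Real.exp 1 := by
        have := Real.add_one_le_exp 1; linarith
      have hlt : Real.exp t < a / c := by
        rw [he, div_lt_iff₀ (by positivity)]
        nlinarith
      have h3 := h t
      simp at h3
      have : Real.exp t * c > a := by
        have := (lt_div_iff_of_neg hc').mp hlt
        linarith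
      linarith
    · left
      refine ⟨hb, ?_⟩
      have := h (c / b)
      have heq : c + (1 - c / b) * b = b := by field_simp; ring
      rw [heq] at this
      linarith [this]

lemma Kexp_isClosed : IsClosed Kexp := by
  rw [Kexp_eq_iInter]
  refine isClosed_iInter fun t => isClosed_le ?_ continuous_fst
  fun_prop

lemma halfplane_mem_closure {a c : ℝ} (ha : 0 ≤ a) (hc : c ≤ 0) :
    ((a, 0, c) : ℝ × ℝ × ℝ) ∈
      closure {x : ℝ × ℝ × ℝ | 0 < x.2.1 ∧ x.2.1 * Real.exp (x.2.2 / x.2.1) ≤ x.1} := by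
  have h0 : Filter.Tendsto (fun n : ℕ => 1 / ((n : ℝ) + 1)) Filter.atTop (nhds 0) :=
    tendsto_one_div_add_atTop_nhds_zero_nat
  have h1 : Filter.Tendsto (fun n : ℕ => a + 1 / ((n : ℝ) + 1)) Filter.atTop (nhds a) := by
    simpa using (tendsto_const_nhds.add h0)
  have htend : Filter.Tendsto (fun n : ℕ => ((a + 1 / (n + 1), 1 / (n + 1), c) : ℝ × ℝ × ℝ))
      Filter.atTop (nhds (a, 0, c)) :=
    h1.prodMk_nhds (h0.prodMk_nhds tendsto_const_nhds)
  refine mem_closure_of_tendsto htend ?_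
  filter_upwards with n
  have hn : (0 : ℝ) < 1 / ((n : ℝ) + 1) := by positivity
  refine ⟨hn, ?_⟩
  have hle : Real.exp (c / (1 / ((n : ℝ) + 1))) ≤ 1 := by
    apply Real.exp_le_one_iff.mpr
    exact div_nonpos_of_nonpos_of_nonneg hc hn.le
  have : 1 / ((n : ℝ) + 1) * Real.exp (c / (1 / ((n : ℝ) + 1))) ≤ 1 / ((n : ℝ) + 1) := by
    nlinarith
  linarith

lemma Kexp_eq_closure :
    Kexp = closure {x : ℝ × ℝ × ℝ | 0 < x.2.1 ∧ x.2.1 * Real.exp (x.2.2 / x.2.1) ≤ x.1} := by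
  apply le_antisymm
  · rintro ⟨a, b, c⟩ (h | ⟨hb, ha, hc⟩)
    · exact subset_closure h
    · simp only at hb
      subst hb
      exact halfplane_mem_closure ha hc
  · exact closure_minimal (fun x hx => Or.inl hx) Kexp_isClosed

/-- `K_exp` is closed, equals the topological closure of its `x₂ > 0` part, and its
half-plane component `{(x₁,0,x₃) : x₁ ≥ 0, x₃ ≤ 0}` consists exactly of the limit
points with `x₂ = 0` of the region with `x₂ > 0`. -/
theorem Kexp_isClosed_and_eq_closure :
    IsClosed Kexp ∧
    Kexp = closure {x : ℝ × ℝ × ℝ | 0 < x.2.1 ∧ x.2.1 * Real.exp (x.2.2 / x.2.1) ≤ x.1} ∧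
    {x : ℝ × ℝ × ℝ | x.2.1 = 0 ∧ 0 ≤ x.1 ∧ x.2.2 ≤ 0} =
      {x : ℝ × ℝ × ℝ | x.2.1 = 0} ∩
        closure {x : ℝ × ℝ × ℝ | 0 < x.2.1 ∧ x.2.1 * Real.exp (x.2.2 / x.2.1) ≤ x.1} := by
  refine ⟨Kexp_isClosed, Kexp_eq_closure, ?_⟩
  rw [← Kexp_eq_closure]
  ext ⟨a, b, c⟩
  simp only [Set.mem_setOf_eq, Set.mem_inter_iff, Kexp]
  constructor
  · rintro ⟨hb, ha, hc⟩
    exact ⟨hb, Or.inr ⟨hb, ha, hc⟩⟩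
  · rintro ⟨hb, h | ⟨_, ha, hc⟩⟩
    · exact absurd hb h.1.ne'
    · exact ⟨hb, ha, hc⟩
end

section
/- The optimal value of the MNL maximum-likelihood problem equals the optimal value of its exponential-cone reformulation: sup_{β∈ℝ^p} L^MNL(β) = sup { ∑_{n=1}^N (⟨β, a_{n j_n}⟩ − t_n) : β ∈ ℝ^p, t ∈ ℝ^N, z with ∑_{j∈S_n} z_{nj} ≤ 1 for all n and z_{nj} ≥ exp(⟨β,a_{nj}⟩ − t_n) for all n and j ∈ S_n } (as an equality in the extended reals). -/
/-- The optimal value of the MNL maximum-likelihood problem equals the optimal value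
of its exponential-cone reformulation (as an equality in the extended reals). -/
theorem mnl_mle_eq_ecp_value (N m p : ℕ)
    (S : Fin N → Finset (Fin m)) (hS : ∀ n, (S n).Nonempty)
    (jc : Fin N → Fin m) (hjc : ∀ n, jc n ∈ S n)
    (a : Fin N → Fin m → Fin p → ℝ) :
    let dot : (Fin p → ℝ) → (Fin p → ℝ) → ℝ := fun x y => ∑ i, x i * y i
    let LMNL : (Fin p → ℝ) → ℝ := fun β => ∑ n, (dot β (a n (jc n)) -
      Real.log (∑ j ∈ S n, Real.exp (dot β (a n j))))
    sSup {x : EReal | ∃ β : Fin p → ℝ, x = (LMNL β : ℝ)} =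
      sSup {x : EReal |
        ∃ (β : Fin p → ℝ) (t : Fin N → ℝ) (z : Fin N → Fin m → ℝ),
          (∀ n, ∑ j ∈ S n, z n j ≤ 1) ∧
          (∀ n, ∀ j ∈ S n, z n j ≥ Real.exp (dot β (a n j) - t n)) ∧
          x = ((∑ n, (dot β (a n (jc n)) - t n) : ℝ) : EReal)} := by
  intro dot LMNL
  apply le_antisymm
  · apply sSup_le_sSup
    rintro x ⟨β, rfl⟩
    refine ⟨β, fun n => Real.log (∑ j ∈ S n, Real.exp (dot β (a n j))),
      fun n j => Real.exp (dot β (a n j) -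
        Real.log (∑ j ∈ S n, Real.exp (dot β (a n j)))), ?_,
      fun n j hj => le_refl _, rfl⟩
    intro n
    have hpos : 0 < ∑ j ∈ S n, Real.exp (dot β (a n j)) :=
      Finset.sum_pos (fun j _ => Real.exp_pos _) (hS n)
    have : ∑ j ∈ S n, Real.exp (dot β (a n j) -
        Real.log (∑ j ∈ S n, Real.exp (dot β (a n j)))) = 1 := by
      simp_rw [Real.exp_sub, Real.exp_log hpos]
      rw [← Finset.sum_div, div_self hpos.ne']
    rw [this]
  · apply sSup_le
    rintro x ⟨β, t, z, hz1, hz2, rfl⟩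
    refine le_sSup_of_le (show ((LMNL β : ℝ) : EReal) ∈ _ from ⟨β, rfl⟩) ?_
    rw [EReal.coe_le_coe_iff]
    apply Finset.sum_le_sum
    intro n _
    have hpos : 0 < ∑ j ∈ S n, Real.exp (dot β (a n j)) :=
      Finset.sum_pos (fun j _ => Real.exp_pos _) (hS n)
    have h1 : ∑ j ∈ S n, Real.exp (dot β (a n j) - t n) ≤ 1 :=
      le_trans (Finset.sum_le_sum (fun j hj => hz2 n j hj)) (hz1 n)
    have h2 : (∑ j ∈ S n, Real.exp (dot β (a n j))) ≤ Real.exp (t n) := by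
      have := h1
      simp_rw [Real.exp_sub, ← Finset.sum_div] at this
      exact (div_le_one (Real.exp_pos _)).mp this
    have h3 : Real.log (∑ j ∈ S n, Real.exp (dot β (a n j))) ≤ t n :=
      (Real.log_le_iff_le_exp hpos).mpr h2
    linarith
end

section
/- For every fixed vector of scale parameters λ with λ_l ∈ (0,1] for all l ∈ {1,…,L}, the nested logit log-likelihood β ↦ L^NL(β,λ) is a concave function on ℝ^p. -/
open Finset Real

private lemma holder_sum {ι : Type*} (t : Finset ι) (ht : t.Nonempty) (u v : ι → ℝ)
    (hu : ∀ i ∈ t, 0 < u i) (hv : ∀ i ∈ t, 0 < v i) {θ μ : ℝ}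
    (hθ : 0 ≤ θ) (hμ : 0 ≤ μ) (hθμ : θ + μ = 1) :
    ∑ i ∈ t, u i ^ θ * v i ^ μ ≤ (∑ i ∈ t, u i) ^ θ * (∑ i ∈ t, v i) ^ μ := by
  set U := ∑ i ∈ t, u i with hUdef
  set V := ∑ i ∈ t, v i with hVdef
  have hU : 0 < U := Finset.sum_pos hu ht
  have hV : 0 < V := Finset.sum_pos hv ht
  have hUp : 0 < U ^ θ := Real.rpow_pos_of_pos hU θ
  have hVp : 0 < V ^ μ := Real.rpow_pos_of_pos hV μ
  have key : ∑ i ∈ t, (u i / U) ^ θ * (v i / V) ^ μ ≤ 1 := by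
    have step : ∑ i ∈ t, (u i / U) ^ θ * (v i / V) ^ μ
        ≤ ∑ i ∈ t, (θ * (u i / U) + μ * (v i / V)) := by
      refine Finset.sum_le_sum fun i hi => ?_
      exact Real.geom_mean_le_arith_mean2_weighted hθ hμ
        (div_nonneg (hu i hi).le hU.le) (div_nonneg (hv i hi).le hV.le) hθμ
    have h1 : ∑ i ∈ t, θ * (u i / U) = θ := by
      rw [← Finset.mul_sum, ← Finset.sum_div, ← hUdef, div_self hU.ne', mul_one]
    have h2 : ∑ i ∈ t, μ * (v i / V) = μ := by
      rw [← Finset.mul_sum, ← Finset.sum_div, ← hVdef, div_self hV.ne', mul_one]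
    calc ∑ i ∈ t, (u i / U) ^ θ * (v i / V) ^ μ
        ≤ ∑ i ∈ t, (θ * (u i / U) + μ * (v i / V)) := step
      _ = 1 := by rw [Finset.sum_add_distrib, h1, h2, hθμ]
  have hterm : ∀ i ∈ t, u i ^ θ * v i ^ μ = U ^ θ * V ^ μ * ((u i / U) ^ θ * (v i / V) ^ μ) := by
    intro i hi
    rw [Real.div_rpow (hu i hi).le hU.le, Real.div_rpow (hv i hi).le hV.le]
    field_simp
  calc ∑ i ∈ t, u i ^ θ * v i ^ μ
      = U ^ θ * V ^ μ * ∑ i ∈ t, (u i / U) ^ θ * (v i / V) ^ μ := by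
        rw [Finset.mul_sum]; exact Finset.sum_congr rfl hterm
    _ ≤ U ^ θ * V ^ μ * 1 := by
        exact mul_le_mul_of_nonneg_left key (by positivity)
    _ = U ^ θ * V ^ μ := mul_one _

private lemma convexOn_log_sum_exp {ι : Type*} {E : Type*} [AddCommGroup E] [Module ℝ E]
    (t : Finset ι) (ht : t.Nonempty) (f : ι → E → ℝ)
    (hf : ∀ i ∈ t, ConvexOn ℝ Set.univ (f i)) :
    ConvexOn ℝ Set.univ (fun x => Real.log (∑ i ∈ t, Real.exp (f i x))) := by
  refine ⟨convex_univ, fun x _ y _ θ μ hθ hμ hθμ => ?_⟩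
  have hA : 0 < ∑ i ∈ t, Real.exp (f i x) := Finset.sum_pos (fun i _ => Real.exp_pos _) ht
  have hB : 0 < ∑ i ∈ t, Real.exp (f i y) := Finset.sum_pos (fun i _ => Real.exp_pos _) ht
  have hz : 0 < ∑ i ∈ t, Real.exp (f i (θ • x + μ • y)) :=
    Finset.sum_pos (fun i _ => Real.exp_pos _) ht
  have hstep : ∑ i ∈ t, Real.exp (f i (θ • x + μ • y))
      ≤ ∑ i ∈ t, Real.exp (f i x) ^ θ * Real.exp (f i y) ^ μ := by
    refine Finset.sum_le_sum fun i hi => ?_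
    have h1 : f i (θ • x + μ • y) ≤ θ * f i x + μ * f i y :=
      (hf i hi).2 (Set.mem_univ x) (Set.mem_univ y) hθ hμ hθμ
    have h2 : Real.exp (f i x) ^ θ * Real.exp (f i y) ^ μ
        = Real.exp (θ * f i x + μ * f i y) := by
      rw [← Real.exp_mul, ← Real.exp_mul, ← Real.exp_add, mul_comm (f i x) θ,
        mul_comm (f i y) μ]
    rw [h2]
    exact Real.exp_le_exp.2 h1
  have hholder : ∑ i ∈ t, Real.exp (f i x) ^ θ * Real.exp (f i y) ^ μ
      ≤ (∑ i ∈ t, Real.exp (f i x)) ^ θ * (∑ i ∈ t, Real.exp (f i y)) ^ μ :=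
    holder_sum t ht _ _ (fun i _ => Real.exp_pos _) (fun i _ => Real.exp_pos _) hθ hμ hθμ
  have hle := hstep.trans hholder
  have hlog := (Real.log_le_log_iff hz (by positivity)).2 hle
  calc Real.log (∑ i ∈ t, Real.exp (f i (θ • x + μ • y)))
      ≤ Real.log ((∑ i ∈ t, Real.exp (f i x)) ^ θ * (∑ i ∈ t, Real.exp (f i y)) ^ μ) := hlog
    _ = θ * Real.log (∑ i ∈ t, Real.exp (f i x)) + μ * Real.log (∑ i ∈ t, Real.exp (f i y)) := by
        rw [Real.log_mul (Real.rpow_pos_of_pos hA θ).ne' (Real.rpow_pos_of_pos hB μ).ne',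
          Real.log_rpow hA, Real.log_rpow hB]
    _ = θ • Real.log (∑ i ∈ t, Real.exp (f i x)) + μ • Real.log (∑ i ∈ t, Real.exp (f i y)) := by
        simp [smul_eq_mul]

private lemma concaveOn_sum' {ι : Type*} {E : Type*} [AddCommGroup E] [Module ℝ E]
    (t : Finset ι) (f : ι → E → ℝ) (h : ∀ i ∈ t, ConcaveOn ℝ Set.univ (f i)) :
    ConcaveOn ℝ Set.univ (fun x => ∑ i ∈ t, f i x) := by
  classical
  induction t using Finset.induction with
  | empty => simpa using concaveOn_const (0 : ℝ) convex_univ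
  | @insert j s hj ih =>
      simp only [Finset.sum_insert hj]
      exact (h j (Finset.mem_insert_self _ _)).add
        (ih fun i hi => h i (Finset.mem_insert_of_mem hi))

private lemma dot_lin {p : ℕ} (c : Fin p → ℝ) (r : ℝ) (x y : Fin p → ℝ) (θ μ : ℝ) :
    (∑ i, (θ • x + μ • y) i * c i) / r
      = θ * ((∑ i, x i * c i) / r) + μ * ((∑ i, y i * c i) / r) := by
  have h : ∀ i : Fin p, (θ • x + μ • y) i * c i = θ * (x i * c i) + μ * (y i * c i) := by
    intro i; simp only [Pi.add_apply, Pi.smul_apply, smul_eq_mul]; ring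
  rw [Finset.sum_congr rfl (fun i _ => h i), Finset.sum_add_distrib,
    ← Finset.mul_sum, ← Finset.mul_sum]
  ring

private lemma affine_convexOn {p : ℕ} (c : Fin p → ℝ) (r : ℝ) :
    ConvexOn ℝ Set.univ (fun β : Fin p → ℝ => (∑ i, β i * c i) / r) :=
  ⟨convex_univ, fun x _ y _ θ μ _ _ _ => by
    simp only [smul_eq_mul]; exact le_of_eq (dot_lin c r x y θ μ)⟩

private lemma affine_concaveOn {p : ℕ} (c : Fin p → ℝ) (r : ℝ) :
    ConcaveOn ℝ Set.univ (fun β : Fin p → ℝ => (∑ i, β i * c i) / r) :=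
  ⟨convex_univ, fun x _ y _ θ μ _ _ _ => by
    simp only [smul_eq_mul]; exact ge_of_eq (dot_lin c r x y θ μ)⟩

set_option maxHeartbeats 1000000 in
/-- For every fixed vector of scale parameters `λ ∈ (0,1]^L`, the nested logit
log-likelihood `β ↦ L^NL(β,λ)` is concave on `ℝ^p`, where
`L^NL(β,λ) = ∑_n [(λ_{l_n}−1)·log W_{n l_n}(β) + ⟨β,a_{n j_n}⟩/λ_{l_n}
             − log (∑_{l'} W_{n l'}(β)^{λ_{l'}})]`
and `W_{nl}(β) = ∑_{j∈N_l∩S_n} exp(⟨β,a_{nj}⟩/λ_l)`. -/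
theorem nl_loglikelihood_concaveOn (m L N p : ℕ)
    (Nl : Fin L → Finset (Fin m))
    (hdisj : ∀ l l' : Fin L, l ≠ l' → Disjoint (Nl l) (Nl l'))
    (hpart : ∀ i : Fin m, ∃ l, i ∈ Nl l)
    (hne : ∀ l, (Nl l).Nonempty)
    (S : Fin N → Finset (Fin m)) (hS : ∀ n l, ((Nl l) ∩ S n).Nonempty)
    (a : Fin N → Fin m → Fin p → ℝ)
    (lam : Fin L → ℝ) (hlam : ∀ l, 0 < lam l ∧ lam l ≤ 1)
    (jc : Fin N → Fin m) (hjc : ∀ n, jc n ∈ S n)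
    (ln : Fin N → Fin L) (hln : ∀ n, jc n ∈ Nl (ln n)) :
    ConcaveOn ℝ Set.univ
      (fun β : Fin p → ℝ =>
        let dot : (Fin p → ℝ) → (Fin p → ℝ) → ℝ := fun x y => ∑ i, x i * y i
        let W : Fin N → Fin L → ℝ := fun n l =>
          ∑ j ∈ Nl l ∩ S n, Real.exp (dot β (a n j) / lam l)
        ∑ n, ((lam (ln n) - 1) * Real.log (W n (ln n)) +
          dot β (a n (jc n)) / lam (ln n) -
          Real.log (∑ l', W n l' ^ lam l'))) := by
  classical
  set Wf : Fin N → Fin L → (Fin p → ℝ) → ℝ := fun n l β =>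
    ∑ j ∈ Nl l ∩ S n, Real.exp ((∑ i, β i * a n j i) / lam l) with hWf
  have hWpos : ∀ n l β, 0 < Wf n l β := fun n l β =>
    Finset.sum_pos (fun j _ => Real.exp_pos _) (hS n l)
  -- log W is convex
  have hlogW : ∀ n l, ConvexOn ℝ Set.univ (fun β => Real.log (Wf n l β)) := by
    intro n l
    refine convexOn_log_sum_exp (Nl l ∩ S n) (hS n l) _ ?_
    exact fun j _ => affine_convexOn (a n j) (lam l)
  show ConcaveOn ℝ Set.univ
    (fun β : Fin p → ℝ => ∑ n, ((lam (ln n) - 1) * Real.log (Wf n (ln n) β) +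
      (∑ i, β i * a n (jc n) i) / lam (ln n) -
      Real.log (∑ l', Wf n l' β ^ lam l')))
  apply concaveOn_sum'
  intro n _
  -- term 1
  have h1 : ConcaveOn ℝ Set.univ
      (fun β => (lam (ln n) - 1) * Real.log (Wf n (ln n) β)) := by
    have h := ((hlogW n (ln n)).smul
      (show (0:ℝ) ≤ 1 - lam (ln n) by linarith [(hlam (ln n)).2])).neg
    have heq : (fun β => (lam (ln n) - 1) * Real.log (Wf n (ln n) β))
        = -(fun β => (1 - lam (ln n)) • Real.log (Wf n (ln n) β)) := by
      funext β; simp only [Pi.neg_apply, smul_eq_mul]; ring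
    rw [heq]; exact h
  -- term 2
  have h2 : ConcaveOn ℝ Set.univ
      (fun β : Fin p → ℝ => (∑ i, β i * a n (jc n) i) / lam (ln n)) :=
    affine_concaveOn (a n (jc n)) (lam (ln n))
  -- term 3
  have h3 : ConvexOn ℝ Set.univ
      (fun β => Real.log (∑ l', Wf n l' β ^ lam l')) := by
    have hrw : (fun β => Real.log (∑ l', Wf n l' β ^ lam l'))
        = fun β => Real.log (∑ l', Real.exp (Real.log (Wf n l' β) * lam l')) := by
      funext β; congr 1
      exact Finset.sum_congr rfl fun l' _ => Real.rpow_def_of_pos (hWpos n l' β) _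
    rw [hrw]
    refine convexOn_log_sum_exp Finset.univ ⟨ln n, Finset.mem_univ _⟩ _ fun l' _ => ?_
    have h := (hlogW n l').smul (hlam l').1.le
    have heq : (fun β => Real.log (Wf n l' β) * lam l')
        = fun β => lam l' • Real.log (Wf n l' β) := by
      funext β; simp [smul_eq_mul, mul_comm]
    rw [heq]; exact h
  exact (h1.add h2).sub h3
end

section
/- Fix β ∈ ℝ^p and λ ∈ (0,1]^L. Over all z = (z_{nl}) ∈ ℝ^{N×L} and y = (y_n) ∈ ℝ^N satisfying z_{nl} ≥ log(∑_{j∈N_l∩S_n} exp(⟨β,a_{nj}⟩/λ_l)) for every n and l, and y_n ≥ log(∑_{l'=1}^L exp(λ_{l'}·z_{n l'})) for every n, the supremum of ∑_{n=1}^N [(λ_{l_n}−1)·z_{n l_n} + ⟨β,a_{n j_n}⟩/λ_{l_n} − y_n] equals L^NL(β,λ), and it is attained when both families of inequalities hold with equality. -/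
/-- Fix `β` and `λ ∈ (0,1]^L`. Over all `(z, y)` with
`z_{nl} ≥ log W_{nl}(β)` and `y_n ≥ log (∑_{l'} exp (λ_{l'}·z_{n l'}))`, the supremum
of `∑_n [(λ_{l_n}−1)·z_{n l_n} + ⟨β,a_{n j_n}⟩/λ_{l_n} − y_n]` equals `L^NL(β,λ)`,
and it is attained when both families of inequalities hold with equality. -/
theorem nl_ecp_fixed_beta (m L N p : ℕ)
    (Nl : Fin L → Finset (Fin m))
    (hdisj : ∀ l l' : Fin L, l ≠ l' → Disjoint (Nl l) (Nl l'))
    (hpart : ∀ i : Fin m, ∃ l, i ∈ Nl l)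
    (hne : ∀ l, (Nl l).Nonempty)
    (S : Fin N → Finset (Fin m)) (hS : ∀ n l, ((Nl l) ∩ S n).Nonempty)
    (a : Fin N → Fin m → Fin p → ℝ)
    (lam : Fin L → ℝ) (hlam : ∀ l, 0 < lam l ∧ lam l ≤ 1)
    (jc : Fin N → Fin m) (hjc : ∀ n, jc n ∈ S n)
    (ln : Fin N → Fin L) (hln : ∀ n, jc n ∈ Nl (ln n))
    (β : Fin p → ℝ) :
    let dot : (Fin p → ℝ) → (Fin p → ℝ) → ℝ := fun x y => ∑ i, x i * y i
    let W : Fin N → Fin L → ℝ := fun n l =>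
      ∑ j ∈ Nl l ∩ S n, Real.exp (dot β (a n j) / lam l)
    let LNL : ℝ := ∑ n, ((lam (ln n) - 1) * Real.log (W n (ln n)) +
      dot β (a n (jc n)) / lam (ln n) - Real.log (∑ l', W n l' ^ lam l'))
    let Feasible : (Fin N → Fin L → ℝ) → (Fin N → ℝ) → Prop := fun z y =>
      (∀ n l, z n l ≥ Real.log (W n l)) ∧
      (∀ n, y n ≥ Real.log (∑ l', Real.exp (lam l' * z n l')))
    let obj : (Fin N → Fin L → ℝ) → (Fin N → ℝ) → ℝ := fun z y =>
      ∑ n, ((lam (ln n) - 1) * z n (ln n) + dot β (a n (jc n)) / lam (ln n) - y n)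
    let zstar : Fin N → Fin L → ℝ := fun n l => Real.log (W n l)
    let ystar : Fin N → ℝ := fun n =>
      Real.log (∑ l', Real.exp (lam l' * zstar n l'))
    Feasible zstar ystar ∧ obj zstar ystar = LNL ∧
      ∀ z y, Feasible z y → obj z y ≤ LNL := by
  intro dot W LNL Feasible obj zstar ystar
  have hWpos : ∀ n l, 0 < W n l := fun n l =>
    Finset.sum_pos (fun j _ => Real.exp_pos _) (hS n l)
  have hrw : ∀ n l, Real.exp (lam l * zstar n l) = W n l ^ lam l := by
    intro n l
    rw [show zstar n l = Real.log (W n l) from rfl, mul_comm,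
      Real.exp_mul, Real.exp_log (hWpos n l)]
  have hystar : ∀ n, ystar n = Real.log (∑ l', W n l' ^ lam l') := by
    intro n
    simp only [ystar]
    congr 1
    exact Finset.sum_congr rfl fun l _ => hrw n l
  refine ⟨⟨fun n l => le_refl _, fun n => le_refl _⟩, ?_, ?_⟩
  · exact Finset.sum_congr rfl fun n _ => by rw [hystar n]
  · intro z y hzy
    apply Finset.sum_le_sum
    intro n _
    have h1 : (lam (ln n) - 1) * z n (ln n) ≤ (lam (ln n) - 1) * Real.log (W n (ln n)) := by
      apply mul_le_mul_of_nonpos_left (hzy.1 n (ln n))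
      linarith [(hlam (ln n)).2]
    have h2 : Real.log (∑ l', W n l' ^ lam l') ≤ y n := by
      refine le_trans ?_ (hzy.2 n)
      rcases Finset.univ.eq_empty_or_nonempty (α := Fin L) with he | hne'
      · simp [he]
      apply Real.log_le_log
      · exact Finset.sum_pos (fun l _ => Real.rpow_pos_of_pos (hWpos n l) _) hne'
      · apply Finset.sum_le_sum
        intro l _
        rw [← hrw n l]
        exact Real.exp_le_exp.mpr (mul_le_mul_of_nonneg_left (hzy.1 n l) (hlam l).1.le)
    linarith
end

section
/- Fix λ ∈ (0,1]^L. The optimal value of the nested logit maximum-likelihood problem over β equals the optimal value of its exponential-cone reformulation: sup_{β∈ℝ^p} L^NL(β,λ) = sup { ∑_{n=1}^N [(λ_{l_n}−1)·z_{n l_n} + ⟨β,a_{n j_n}⟩/λ_{l_n} − y_n] } over all β ∈ ℝ^p, z ∈ ℝ^{N×L}, y ∈ ℝ^N, k = (k_{njl}) and h = (h_{nl}) satisfying, for all n, l and j ∈ N_l ∩ S_n: ∑_{j∈N_l∩S_n} k_{njl} ≤ 1, k_{njl} ≥ exp(⟨β,a_{nj}⟩/λ_l − z_{nl}), ∑_{l=1}^L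 h_{nl} ≤ 1, and h_{nl} ≥ exp(λ_l·z_{nl} − y_n) (as an equality in the extended reals). -/
/-- Fix `λ ∈ (0,1]^L`. The optimal value of the nested logit maximum-likelihood
problem over `β` equals the optimal value of its exponential-cone reformulation
(as an equality in the extended reals). -/
theorem nl_mle_eq_ecp_value (m L N p : ℕ)
    (Nl : Fin L → Finset (Fin m))
    (hdisj : ∀ l l' : Fin L, l ≠ l' → Disjoint (Nl l) (Nl l'))
    (hpart : ∀ i : Fin m, ∃ l, i ∈ Nl l)
    (hne : ∀ l, (Nl l).Nonempty)
    (S : Fin N → Finset (Fin m)) (hS : ∀ n l, ((Nl l) ∩ S n).Nonempty)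
    (a : Fin N → Fin m → Fin p → ℝ)
    (lam : Fin L → ℝ) (hlam : ∀ l, 0 < lam l ∧ lam l ≤ 1)
    (jc : Fin N → Fin m) (hjc : ∀ n, jc n ∈ S n)
    (ln : Fin N → Fin L) (hln : ∀ n, jc n ∈ Nl (ln n)) :
    let dot : (Fin p → ℝ) → (Fin p → ℝ) → ℝ := fun x y => ∑ i, x i * y i
    let W : (Fin p → ℝ) → Fin N → Fin L → ℝ := fun β n l =>
      ∑ j ∈ Nl l ∩ S n, Real.exp (dot β (a n j) / lam l)
    let LNL : (Fin p → ℝ) → ℝ := fun β =>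
      ∑ n, ((lam (ln n) - 1) * Real.log (W β n (ln n)) +
        dot β (a n (jc n)) / lam (ln n) - Real.log (∑ l', W β n l' ^ lam l'))
    sSup {x : EReal | ∃ β : Fin p → ℝ, x = (LNL β : ℝ)} =
      sSup {x : EReal |
        ∃ (β : Fin p → ℝ) (z : Fin N → Fin L → ℝ) (y : Fin N → ℝ)
          (k : Fin N → Fin m → Fin L → ℝ) (h : Fin N → Fin L → ℝ),
          (∀ n l, ∑ j ∈ Nl l ∩ S n, k n j l ≤ 1) ∧
          (∀ n l, ∀ j ∈ Nl l ∩ S n,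
            k n j l ≥ Real.exp (dot β (a n j) / lam l - z n l)) ∧
          (∀ n, ∑ l, h n l ≤ 1) ∧
          (∀ n l, h n l ≥ Real.exp (lam l * z n l - y n)) ∧
          x = ((∑ n, ((lam (ln n) - 1) * z n (ln n) +
            dot β (a n (jc n)) / lam (ln n) - y n) : ℝ) : EReal)} := by
  intro dot W LNL
  have hWpos : ∀ β n l, 0 < W β n l := fun β n l =>
    Finset.sum_pos (fun j _ => Real.exp_pos _) (hS n l)
  have hSumpos : ∀ (β) (n : Fin N), 0 < ∑ l', W β n l' ^ lam l' := by
    intro β n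
    haveI : Nonempty (Fin L) := ⟨ln n⟩
    exact Finset.sum_pos (fun l _ => Real.rpow_pos_of_pos (hWpos β n l) _)
      Finset.univ_nonempty
  apply le_antisymm
  · -- every value of LNL is attained by the ECP with the natural witnesses
    apply sSup_le_sSup
    rintro x ⟨β, rfl⟩
    refine ⟨β, fun n l => Real.log (W β n l),
      fun n => Real.log (∑ l', W β n l' ^ lam l'),
      fun n j l => Real.exp (dot β (a n j) / lam l - Real.log (W β n l)),
      fun n l => Real.exp (lam l * Real.log (W β n l) -
        Real.log (∑ l', W β n l' ^ lam l')), ?_, ?_, ?_, ?_, rfl⟩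
    · intro n l
      have : ∑ j ∈ Nl l ∩ S n,
          Real.exp (dot β (a n j) / lam l - Real.log (W β n l))
          = (∑ j ∈ Nl l ∩ S n, Real.exp (dot β (a n j) / lam l)) / W β n l := by
        rw [Finset.sum_div]
        refine Finset.sum_congr rfl fun j _ => ?_
        rw [Real.exp_sub, Real.exp_log (hWpos β n l)]
      rw [this, div_self (ne_of_gt (hWpos β n l))]
    · exact fun n l j _ => le_refl _
    · intro n
      have : ∀ l : Fin L, Real.exp (lam l * Real.log (W β n l) -
          Real.log (∑ l', W β n l' ^ lam l'))
          = W β n l ^ lam l / (∑ l', W β n l' ^ lam l') := by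
        intro l
        rw [Real.exp_sub, Real.exp_log (hSumpos β n),
          Real.rpow_def_of_pos (hWpos β n l), mul_comm]
      rw [Finset.sum_congr rfl fun l _ => this l, ← Finset.sum_div,
        div_self (ne_of_gt (hSumpos β n))]
    · exact fun n l => le_refl _
  · apply sSup_le
    rintro x ⟨β, z, y, k, h, hk1, hk2, hh1, hh2, rfl⟩
    have key : (∑ n, ((lam (ln n) - 1) * z n (ln n) +
        dot β (a n (jc n)) / lam (ln n) - y n)) ≤ LNL β := by
      refine Finset.sum_le_sum fun n _ => ?_
      have hz : ∀ l, Real.log (W β n l) ≤ z n l := by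
        intro l
        have h1 : ∑ j ∈ Nl l ∩ S n, Real.exp (dot β (a n j) / lam l - z n l) ≤ 1 :=
          le_trans (Finset.sum_le_sum fun j hj => hk2 n l j hj) (hk1 n l)
        have h2 : W β n l / Real.exp (z n l) ≤ 1 := by
          rw [Finset.sum_div]
          calc (∑ j ∈ Nl l ∩ S n, Real.exp (dot β (a n j) / lam l) / Real.exp (z n l))
              = ∑ j ∈ Nl l ∩ S n, Real.exp (dot β (a n j) / lam l - z n l) :=
                Finset.sum_congr rfl fun j _ => (Real.exp_sub _ _).symm
            _ ≤ 1 := h1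
        rw [Real.log_le_iff_le_exp (hWpos β n l)]
        exact (div_le_one (Real.exp_pos _)).mp h2
      have hy : Real.log (∑ l', W β n l' ^ lam l') ≤ y n := by
        have h1 : ∑ l, Real.exp (lam l * z n l - y n) ≤ 1 :=
          le_trans (Finset.sum_le_sum fun l _ => hh2 n l) (hh1 n)
        have h2 : ∀ l : Fin L, W β n l ^ lam l ≤ Real.exp (lam l * z n l) := by
          intro l
          rw [Real.rpow_def_of_pos (hWpos β n l), mul_comm]
          exact Real.exp_le_exp.mpr
            (mul_le_mul_of_nonneg_left (hz l) (le_of_lt (hlam l).1))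
        have h3 : (∑ l', W β n l' ^ lam l') / Real.exp (y n) ≤ 1 := by
          rw [Finset.sum_div]
          calc (∑ l', W β n l' ^ lam l' / Real.exp (y n))
              ≤ ∑ l', Real.exp (lam l' * z n l') / Real.exp (y n) :=
                Finset.sum_le_sum fun l _ => by
                  gcongr
                  exact h2 l
            _ = ∑ l', Real.exp (lam l' * z n l' - y n) :=
                Finset.sum_congr rfl fun l _ => (Real.exp_sub _ _).symm
            _ ≤ 1 := h1
        rw [Real.log_le_iff_le_exp (hSumpos β n)]
        exact (div_le_one (Real.exp_pos _)).mp h3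
      have hmul : (lam (ln n) - 1) * z n (ln n) ≤
          (lam (ln n) - 1) * Real.log (W β n (ln n)) :=
        mul_le_mul_of_nonpos_left (hz (ln n)) (by linarith [(hlam (ln n)).2])
      have := hy
      linarith
    calc ((∑ n, ((lam (ln n) - 1) * z n (ln n) +
        dot β (a n (jc n)) / lam (ln n) - y n) : ℝ) : EReal)
        ≤ ((LNL β : ℝ) : EReal) := EReal.coe_le_coe_iff.mpr key
      _ ≤ _ := le_sSup (Set.mem_setOf.mpr ⟨β, rfl⟩)
end
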